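/- Let k₁, k₂ ∈ (0,1) with k₁ ≠ k₂ and let φ be the rational self-map of ℙ¹(ℂ)×ℙ¹(ℂ) defined by φ([u₀:u₁],[v₀:v₁]) = ([u₀v₀+u₁v₁ : u₁v₀−u₀v₁], [−v₀:v₁]). Then: (i) φ is defined exactly away from the two points p = ([1:i],[1:i]) and σ₀(p) = ([1:−i],[1:−i]) (these are precisely the points where both u₀v₀+u₁v₁ and u₁v₀−u₀v₁ vanish); (ii) φ∘φ is the identity at every point ([u₀:u₁],[v₀:v₁]) with v₀²+v₁² ≠ 0; and (iii) φ maps q = ([1:k₁i],[1:k₂i]) to σ₀(q) = ([1:−k₁i],[1:−k₂i]) if and only if k₁²k₂ − 2k₁ + k₂ = 0. -/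

import Mathlib

noncomputable section

open ComplexConjugate

/-- The projective line `ℙ¹(K)` over a field `K`, i.e. the projectivization of `K²`. -/
abbrev Pone (K : Type) [Field K] : Type := Projectivization K (Fin 2 → K)

theorem vec_ne_zero {K : Type} [Field K] {a b : K} (h : a ≠ 0 ∨ b ≠ 0) :
    (![a, b] : Fin 2 → K) ≠ 0 := by
  intro hv
  rcases h with h | h
  · exact h (by simpa using congrFun hv 0)
  · exact h (by simpa using congrFun hv 1)

/-- The point `[a : b]` of the projective line `ℙ¹(K)`. -/
def pt {K : Type} [Field K] (a b : K) (h : a ≠ 0 ∨ b ≠ 0) : Pone K :=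
  Projectivization.mk K ![a, b] (vec_ne_zero h)

/-- The point `[1 : b]` of `ℙ¹(ℂ)`. -/
def Pb (b : ℂ) : Pone ℂ := pt 1 b (Or.inl one_ne_zero)

/-- The vector-level formula of the rational self-map
`φ([u₀:u₁],[v₀:v₁]) = ([u₀v₀ + u₁v₁ : u₁v₀ − u₀v₁], [−v₀ : v₁])` of `ℙ¹(ℂ) × ℙ¹(ℂ)`. -/
def F15 (w : (Fin 2 → ℂ) × (Fin 2 → ℂ)) : (Fin 2 → ℂ) × (Fin 2 → ℂ) :=
  (![w.1 0 * w.2 0 + w.1 1 * w.2 1, w.1 1 * w.2 0 - w.1 0 * w.2 1],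
   ![-(w.2 0), w.2 1])


lemma fin2_eq (u : Fin 2 → ℂ) : u = ![u 0, u 1] := by
  funext i; fin_cases i <;> rfl

lemma fin2_ne_zero {u : Fin 2 → ℂ} (h : u ≠ 0) : u 0 ≠ 0 ∨ u 1 ≠ 0 := by
  by_contra hc
  push_neg at hc
  exact h (by rw [fin2_eq u, hc.1, hc.2]; ext i; fin_cases i <;> simp)

lemma mk_eq_Pb {u : Fin 2 → ℂ} (hu : u ≠ 0) (b : ℂ) :
    Projectivization.mk ℂ u hu = Pb b ↔ u 0 ≠ 0 ∧ u 1 = u 0 * b := by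
  unfold Pb pt
  rw [Projectivization.mk_eq_mk_iff']
  constructor
  · rintro ⟨a, ha⟩
    have h0 := congrFun ha 0
    have h1 := congrFun ha 1
    simp only [Pi.smul_apply, smul_eq_mul, Matrix.cons_val_zero, Matrix.cons_val_one,
      Matrix.head_cons, mul_one] at h0 h1
    have ha0 : a ≠ 0 := by
      rintro rfl
      apply hu
      rw [fin2_eq u, ← h0, ← h1]
      ext i; fin_cases i <;> simp
    exact ⟨h0 ▸ ha0, by rw [← h0, h1]⟩
  · rintro ⟨h0, h1⟩
    refine ⟨u 0, ?_⟩
    funext i; fin_cases i <;> simp [h1]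

/-- Let `k₁, k₂ ∈ (0,1)` with `k₁ ≠ k₂`, and let `φ` be the rational
self-map of `ℙ¹(ℂ) × ℙ¹(ℂ)` given by `F15`. Then:
(i) `φ` is defined exactly away from `p = ([1:i],[1:i])` and `σ₀(p) = ([1:−i],[1:−i])`
(these are precisely the points where both `u₀v₀ + u₁v₁` and `u₁v₀ − u₀v₁` vanish, while the
second coordinate pair never vanishes);
(ii) `φ ∘ φ` is the identity at every point `([u₀:u₁],[v₀:v₁])` with `v₀² + v₁² ≠ 0` (the
image vector pair is a nonzero scalar multiple of the original one);
(iii) `φ` maps `q = ([1:k₁i],[1:k₂i])` to `σ₀(q) = ([1:−k₁i],[1:−k₂i])` if and only if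
`k₁²k₂ − 2k₁ + k₂ = 0`. -/
theorem statement15 (k₁ k₂ : ℝ)
    (hk₁ : k₁ ∈ Set.Ioo (0 : ℝ) 1) (hk₂ : k₂ ∈ Set.Ioo (0 : ℝ) 1) (hne : k₁ ≠ k₂) :
    -- (i)
    (∀ (u v : Fin 2 → ℂ) (hu : u ≠ 0) (hv : v ≠ 0),
      (F15 (u, v)).2 ≠ 0 ∧
      ((F15 (u, v)).1 = 0 ↔
        ((Projectivization.mk ℂ u hu, Projectivization.mk ℂ v hv)
            = (Pb Complex.I, Pb Complex.I) ∨
          (Projectivization.mk ℂ u hu, Projectivization.mk ℂ v hv)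
            = (Pb (-Complex.I), Pb (-Complex.I))))) ∧
    -- (ii)
    (∀ u v : Fin 2 → ℂ, u ≠ 0 → v ≠ 0 → v 0 ^ 2 + v 1 ^ 2 ≠ 0 →
      ∃ c : ℂ, c ≠ 0 ∧ F15 (F15 (u, v)) = (c • u, v)) ∧
    -- (iii)
    ((∃ (h1 : (F15 (![1, (k₁ : ℂ) * Complex.I], ![1, (k₂ : ℂ) * Complex.I])).1 ≠ 0)
        (h2 : (F15 (![1, (k₁ : ℂ) * Complex.I], ![1, (k₂ : ℂ) * Complex.I])).2 ≠ 0),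
        (Projectivization.mk ℂ
            (F15 (![1, (k₁ : ℂ) * Complex.I], ![1, (k₂ : ℂ) * Complex.I])).1 h1,
         Projectivization.mk ℂ
            (F15 (![1, (k₁ : ℂ) * Complex.I], ![1, (k₂ : ℂ) * Complex.I])).2 h2)
          = (Pb (-((k₁ : ℂ) * Complex.I)), Pb (-((k₂ : ℂ) * Complex.I))))
      ↔ k₁ ^ 2 * k₂ - 2 * k₁ + k₂ = 0) := by
  obtain ⟨hk₁0, hk₁1⟩ := hk₁
  obtain ⟨hk₂0, hk₂1⟩ := hk₂
  refine ⟨?_, ?_, ?_⟩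
  · -- (i)
    intro u v hu hv
    constructor
    · intro h2
      have h0 := congrFun h2 0
      have h1 := congrFun h2 1
      simp only [F15, Matrix.cons_val_zero, Matrix.cons_val_one, Matrix.head_cons,
        Pi.zero_apply, neg_eq_zero] at h0 h1
      exact hv (by rw [fin2_eq v, h0, h1]; ext i; fin_cases i <;> simp)
    · constructor
      · intro h0
        have e1 := congrFun h0 0
        have e2 := congrFun h0 1
        simp only [F15, Matrix.cons_val_zero, Matrix.cons_val_one, Matrix.head_cons,
          Pi.zero_apply] at e1 e2
        have hsum : u 0 ^ 2 + u 1 ^ 2 = 0 := by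
          have hv0 : (u 0 ^ 2 + u 1 ^ 2) * v 0 = 0 := by
            linear_combination u 0 * e1 + u 1 * e2
          have hv1 : (u 0 ^ 2 + u 1 ^ 2) * v 1 = 0 := by
            linear_combination u 1 * e1 - u 0 * e2
          rcases fin2_ne_zero hv with h | h
          · exact (mul_eq_zero.mp hv0).resolve_right h
          · exact (mul_eq_zero.mp hv1).resolve_right h
        have hu0 : u 0 ≠ 0 := by
          intro hz
          have : u 1 = 0 := by
            have := hsum
            rw [hz] at this
            simpa [pow_eq_zero_iff] using this
          exact absurd (fin2_ne_zero hu) (by simp [hz, this])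
        have hfac : (u 1 - Complex.I * u 0) * (u 1 + Complex.I * u 0) = 0 := by
          linear_combination hsum - u 0 ^ 2 * Complex.I_sq
        rcases mul_eq_zero.mp hfac with hcase | hcase
        · -- u 1 = I * u 0 : point p
          have hu1 : u 1 = u 0 * Complex.I := by linear_combination hcase
          have hvrel : u 0 * (v 0 * Complex.I - v 1) = 0 := by
            linear_combination Complex.I * e1 - (u 0 * v 1) * Complex.I_sq
              - Complex.I * v 1 * hcase
          have hv1 : v 1 = v 0 * Complex.I := by
            have := (mul_eq_zero.mp hvrel).resolve_left hu0
            linear_combination -this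
          have hv0 : v 0 ≠ 0 := by
            intro hz
            exact absurd (fin2_ne_zero hv) (by simp [hz, hv1])
          left
          rw [Prod.mk.injEq]
          exact ⟨(mk_eq_Pb hu _).mpr ⟨hu0, hu1⟩, (mk_eq_Pb hv _).mpr ⟨hv0, hv1⟩⟩
        · -- u 1 = -I * u 0 : point σ₀(p)
          have hu1 : u 1 = u 0 * (-Complex.I) := by linear_combination hcase
          have hvrel : u 0 * (v 0 * Complex.I + v 1) = 0 := by
            linear_combination Complex.I * e1 + (u 0 * v 1) * Complex.I_sq
              - Complex.I * v 1 * hcase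
          have hv1 : v 1 = v 0 * (-Complex.I) := by
            have := (mul_eq_zero.mp hvrel).resolve_left hu0
            linear_combination this
          have hv0 : v 0 ≠ 0 := by
            intro hz
            exact absurd (fin2_ne_zero hv) (by simp [hz, hv1])
          right
          rw [Prod.mk.injEq]
          exact ⟨(mk_eq_Pb hu _).mpr ⟨hu0, hu1⟩, (mk_eq_Pb hv _).mpr ⟨hv0, hv1⟩⟩
      · rintro (h | h) <;>
        · rw [Prod.mk.injEq] at h
          obtain ⟨hu0, hu1⟩ := (mk_eq_Pb hu _).mp h.1
          obtain ⟨hv0, hv1⟩ := (mk_eq_Pb hv _).mp h.2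
          funext i
          fin_cases i
          · simp only [F15, Fin.mk_zero, Matrix.cons_val_zero, Pi.zero_apply, hu1, hv1]
            linear_combination (u 0 * v 0) * Complex.I_sq
          · simp only [F15, Fin.mk_one, Matrix.cons_val_one, Matrix.head_cons,
              Pi.zero_apply, hu1, hv1, Matrix.cons_val_zero]
            ring
  · -- (ii)
    intro u v hu hv hvv
    refine ⟨-(v 0 ^ 2 + v 1 ^ 2), neg_ne_zero.mpr hvv, ?_⟩
    refine Prod.ext ?_ ?_ <;> funext i <;> fin_cases i <;>
      simp only [F15, Fin.mk_zero, Fin.mk_one, Matrix.cons_val_zero, Matrix.cons_val_one,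
        Matrix.head_cons, Pi.smul_apply, smul_eq_mul] <;> ring
  · -- (iii)
    have hlt : k₁ * k₂ < 1 := by nlinarith
    have hne1 : (1 : ℂ) + (k₁ : ℂ) * Complex.I * ((k₂ : ℂ) * Complex.I) ≠ 0 := by
      intro h
      have hr : ((1 - k₁ * k₂ : ℝ) : ℂ) = 0 := by
        push_cast
        linear_combination h - (k₁ : ℂ) * k₂ * Complex.I_sq
      rw [Complex.ofReal_eq_zero, sub_eq_zero] at hr
      exact absurd hr.symm (ne_of_lt hlt)
    constructor
    · rintro ⟨h1, h2, heq⟩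
      rw [Prod.mk.injEq] at heq
      obtain ⟨hq0, hq1⟩ := (mk_eq_Pb h1 _).mp heq.1
      simp only [F15, Matrix.cons_val_zero, Matrix.cons_val_one, Matrix.head_cons,
        one_mul, mul_one] at hq1
      have hC : ((k₁ ^ 2 * k₂ - 2 * k₁ + k₂ : ℝ) : ℂ) * Complex.I = 0 := by
        push_cast
        linear_combination -hq1 + (k₁ : ℂ) ^ 2 * k₂ * Complex.I * Complex.I_sq
      have := (mul_eq_zero.mp hC).resolve_right Complex.I_ne_zero
      exact_mod_cast this
    · intro hk
      have hkC : (k₁ : ℂ) ^ 2 * k₂ - 2 * k₁ + k₂ = 0 := by exact_mod_cast hk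
      have h1 : (F15 (![1, (k₁ : ℂ) * Complex.I], ![1, (k₂ : ℂ) * Complex.I])).1 ≠ 0 := by
        intro h
        have := congrFun h 0
        simp only [F15, Matrix.cons_val_zero, Matrix.cons_val_one, Matrix.head_cons,
          one_mul, Pi.zero_apply] at this
        exact hne1 this
      have h2 : (F15 (![1, (k₁ : ℂ) * Complex.I], ![1, (k₂ : ℂ) * Complex.I])).2 ≠ 0 := by
        intro h
        have := congrFun h 0
        simp only [F15, Matrix.cons_val_zero, Pi.zero_apply, neg_eq_zero] at this
        exact one_ne_zero this
      refine ⟨h1, h2, ?_⟩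
      rw [Prod.mk.injEq]
      constructor
      · rw [mk_eq_Pb]
        constructor
        · simpa only [F15, Matrix.cons_val_zero, Matrix.cons_val_one, Matrix.head_cons, one_mul] using hne1
        · simp only [F15, Matrix.cons_val_zero, Matrix.cons_val_one, Matrix.head_cons,
            one_mul, mul_one]
          linear_combination -Complex.I * hkC + (k₁ : ℂ) ^ 2 * k₂ * Complex.I * Complex.I_sq
      · rw [mk_eq_Pb]
        refine ⟨by simp [F15], ?_⟩
        simp only [F15, Matrix.cons_val_zero, Matrix.cons_val_one, Matrix.head_cons]
        ring
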